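/- Let n be a positive integer, Δt, Δx > 0, and let L² ∈ ℝ^{n×n} be the circulant matrix with entries (indices modulo n) L²_{j,j±1} = ±Δt/(2Δx) and all other entries zero. Let A ∈ ℝ^{m×m} be symmetric with c = λ_max(A)·Δt/Δx. Then for every u ∈ ℝ^{n×m}: ‖u + L² u Aᵀ‖_F² = ‖u‖_F² + ‖L² u Aᵀ‖_F² ≤ (1 + c² · max over α ∈ {1,…,n} of sin²(2πα/n)) · ‖u‖_F². -/

import Mathlib

open Matrix
open scoped Real

/- Periodic (circulant) Lax-Friedrichs matrices: L¹ has entries 1/2 on the super- and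
sub-diagonal (indices modulo n), L² has entries ±Δt/(2Δx) there; all other entries zero. -/

noncomputable def L1 (n : ℕ) [NeZero n] : Matrix (Fin n) (Fin n) ℝ :=
  Matrix.of fun j k => (if k = j + 1 then (1 / 2 : ℝ) else 0) + (if k = j - 1 then (1 / 2 : ℝ) else 0)

noncomputable def L2 (n : ℕ) [NeZero n] (Δt Δx : ℝ) : Matrix (Fin n) (Fin n) ℝ :=
  Matrix.of fun j k =>
    (if k = j + 1 then Δt / (2 * Δx) else 0) + (if k = j - 1 then -(Δt / (2 * Δx)) else 0)

/- Frobenius norm of a real matrix. -/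
noncomputable def frob {n m : ℕ} (M : Matrix (Fin n) (Fin m) ℝ) : ℝ :=
  Real.sqrt (∑ i, ∑ j, (M i j) ^ 2)

/- Spectral norm (largest absolute eigenvalue, for symmetric matrices) of a real matrix:
the operator norm induced by the Euclidean norm. -/
noncomputable def specNorm {m : ℕ} (A : Matrix (Fin m) (Fin m) ℝ) : ℝ :=
  ‖Matrix.toEuclideanCLM (𝕜 := ℝ) A‖

/-! ### Auxiliary: discrete Fourier analysis on `Fin n` -/

noncomputable def Efn (n : ℕ) (t : ℤ) : ℂ := Complex.exp (2 * Real.pi * Complex.I * t / n)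

lemma Efn_add (n : ℕ) (a b : ℤ) : Efn n (a+b) = Efn n a * Efn n b := by
  rw [Efn, Efn, Efn, ← Complex.exp_add]
  congr 1
  push_cast
  ring

lemma Efn_nat_dvd (n : ℕ) [NeZero n] (t : ℤ) : Efn n (n * t) = 1 := by
  have hn : (n:ℂ) ≠ 0 := Nat.cast_ne_zero.mpr (NeZero.ne n)
  rw [Efn]
  have h : 2 * (Real.pi:ℂ) * Complex.I * ((n : ℤ) * t : ℤ) / n = t * (2 * Real.pi * Complex.I) := by
    push_cast
    field_simp
  rw [h, Complex.exp_int_mul_two_pi_mul_I]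

lemma Efn_congr (n : ℕ) [NeZero n] {a b : ℤ} (h : (n:ℤ) ∣ (a - b)) : Efn n a = Efn n b := by
  obtain ⟨t, ht⟩ := h
  have : a = b + n * t := by omega
  rw [this, Efn_add, Efn_nat_dvd, mul_one]

lemma Efn_conj (n : ℕ) (t : ℤ) : starRingEnd ℂ (Efn n t) = Efn n (-t) := by
  rw [Efn, Efn, ← Complex.exp_conj]
  congr 1
  rw [map_div₀]
  simp [_root_.map_mul, Complex.conj_I, map_ofNat]

lemma Efn_pow (n : ℕ) (t : ℤ) (k : ℕ) : Efn n t ^ k = Efn n (t * k) := by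
  rw [Efn, Efn, ← Complex.exp_nat_mul]
  congr 1
  push_cast
  ring

lemma Efn_eq_one_iff (n : ℕ) [NeZero n] (t : ℤ) : Efn n t = 1 ↔ (n:ℤ) ∣ t := by
  have hn : (n:ℂ) ≠ 0 := Nat.cast_ne_zero.mpr (NeZero.ne n)
  have hI : (2 * (Real.pi:ℂ) * Complex.I) ≠ 0 := by
    simp [Real.pi_ne_zero, Complex.I_ne_zero]
  rw [Efn, Complex.exp_eq_one_iff]
  constructor
  · rintro ⟨k, hk⟩
    refine ⟨k, ?_⟩
    have h2 : (t:ℂ) = n * k := by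
      field_simp at hk
      have h3 : (2 * (Real.pi:ℂ) * Complex.I) * t = (2 * (Real.pi:ℂ) * Complex.I) * (n * k) := by
        calc (2 * (Real.pi:ℂ) * Complex.I) * t = (k:ℂ) * (2 * Real.pi * Complex.I) * n := by rw [hk]; ring
        _ = (2 * (Real.pi:ℂ) * Complex.I) * (n * k) := by ring
      exact mul_left_cancel₀ hI h3
    exact_mod_cast h2
  · rintro ⟨k, rfl⟩
    refine ⟨k, ?_⟩
    push_cast
    field_simp

lemma Efn_sum (n : ℕ) [NeZero n] (t : ℤ) :
    ∑ k : Fin n, Efn n (t * k.val) = if (n:ℤ) ∣ t then (n:ℂ) else 0 := by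
  have h1 : ∑ k : Fin n, Efn n (t * k.val) = ∑ i ∈ Finset.range n, Efn n t ^ i := by
    rw [Fin.sum_univ_eq_sum_range (fun i => Efn n (t * i))]
    exact Finset.sum_congr rfl fun i _ => (Efn_pow n t i).symm
  rw [h1]
  split_ifs with h
  · rw [(Efn_eq_one_iff n t).mpr h]
    simp
  · have hx : Efn n t ≠ 1 := fun hx => h ((Efn_eq_one_iff n t).mp hx)
    rw [geom_sum_eq hx]
    have hpow : Efn n t ^ n = 1 := by
      rw [Efn_pow]
      exact (Efn_eq_one_iff n _).mpr ⟨t, by push_cast; ring⟩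
    rw [hpow]
    simp

/-- Parseval identity for the discrete Fourier transform. -/
lemma parseval_fin (n : ℕ) [NeZero n] (v : Fin n → ℝ) :
    ∑ k : Fin n, Complex.normSq (∑ j : Fin n, (v j : ℂ) * Efn n (j.val * k.val))
      = n * ∑ j : Fin n, (v j)^2 := by
  have key : ∑ k : Fin n, (∑ j : Fin n, (v j : ℂ) * Efn n (j.val * k.val)) *
        starRingEnd ℂ (∑ j : Fin n, (v j : ℂ) * Efn n (j.val * k.val))
      = (n : ℂ) * ∑ j : Fin n, ((v j : ℂ))^2 := by
    have expand : ∀ k : Fin n,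
        (∑ j : Fin n, (v j : ℂ) * Efn n (j.val * k.val)) *
          starRingEnd ℂ (∑ j : Fin n, (v j : ℂ) * Efn n (j.val * k.val))
        = ∑ j : Fin n, ∑ j' : Fin n,
            (v j : ℂ) * (v j' : ℂ) * Efn n (((j.val : ℤ) - j'.val) * k.val) := by
      intro k
      rw [map_sum, Finset.sum_mul_sum]
      refine Finset.sum_congr rfl fun j _ => Finset.sum_congr rfl fun j' _ => ?_
      rw [_root_.map_mul, Complex.conj_ofReal, Efn_conj]
      have : Efn n ((j.val:ℤ) * k.val) * Efn n (-((j'.val:ℤ) * k.val))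
          = Efn n (((j.val : ℤ) - j'.val) * k.val) := by
        rw [← Efn_add]; congr 1; ring
      calc (v j : ℂ) * Efn n ((j.val:ℤ) * k.val) * ((v j' : ℂ) * Efn n (-((j'.val:ℤ) * k.val)))
          = (v j : ℂ) * (v j') * (Efn n ((j.val:ℤ) * k.val) * Efn n (-((j'.val:ℤ) * k.val))) := by ring
        _ = _ := by rw [this]
    calc ∑ k : Fin n, (∑ j : Fin n, (v j : ℂ) * Efn n (j.val * k.val)) *
          starRingEnd ℂ (∑ j : Fin n, (v j : ℂ) * Efn n (j.val * k.val))
        = ∑ k : Fin n, ∑ j : Fin n, ∑ j' : Fin n,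
            (v j : ℂ) * (v j' : ℂ) * Efn n (((j.val : ℤ) - j'.val) * k.val) := by
          exact Finset.sum_congr rfl fun k _ => expand k
      _ = ∑ j : Fin n, ∑ j' : Fin n,
            (v j : ℂ) * (v j' : ℂ) * ∑ k : Fin n, Efn n (((j.val : ℤ) - j'.val) * k.val) := by
          rw [Finset.sum_comm]
          refine Finset.sum_congr rfl fun j _ => ?_
          rw [Finset.sum_comm]
          refine Finset.sum_congr rfl fun j' _ => ?_
          rw [Finset.mul_sum]
      _ = (n : ℂ) * ∑ j : Fin n, ((v j : ℂ))^2 := by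
          rw [Finset.mul_sum]
          refine Finset.sum_congr rfl fun j _ => ?_
          rw [Finset.sum_eq_single j]
          · rw [Efn_sum, if_pos ⟨0, by ring⟩]
            ring
          · intro j' _ hne
            rw [Efn_sum, if_neg, mul_zero]
            intro hdvd
            apply hne
            have hj := j.isLt; have hj' := j'.isLt
            have hz : ((j.val:ℤ) - j'.val) = 0 := by
              refine Int.eq_zero_of_abs_lt_dvd hdvd ?_
              rw [abs_lt]; omega
            have : j'.val = j.val := by omega
            exact Fin.ext this
          · intro h; exact absurd (Finset.mem_univ j) h
  simp only [Complex.mul_conj] at key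
  have lhsre : (∑ k : Fin n, (Complex.normSq (∑ j : Fin n, (v j : ℂ) * Efn n (j.val * k.val)) : ℂ))
      = ((∑ k : Fin n, Complex.normSq (∑ j : Fin n, (v j : ℂ) * Efn n (j.val * k.val)) : ℝ) : ℂ) := by
    push_cast; ring
  rw [lhsre] at key
  have rhs : ((n : ℂ) * ∑ j : Fin n, ((v j : ℂ))^2) = (((n:ℝ) * ∑ j : Fin n, (v j)^2 : ℝ) : ℂ) := by
    push_cast; ring
  rw [rhs] at key
  exact_mod_cast key

lemma fin_val_dvd_add (n : ℕ) [NeZero n] (i : Fin n) :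
    (n:ℤ) ∣ (((i+1).val : ℤ) - ((i.val:ℤ) + 1)) := by
  have h : ((i+1).val : ℕ) ≡ i.val + 1 [MOD n] := by
    rw [Fin.add_def, Fin.val_one']
    calc (i.val + 1 % n) % n ≡ i.val + 1 % n [MOD n] := (Nat.mod_modEq _ n)
      _ ≡ i.val + 1 [MOD n] := Nat.ModEq.add_left _ (Nat.mod_modEq 1 n)
  obtain ⟨t, ht⟩ := h.dvd
  have h2 : ((i.val:ℤ) + 1) - (((i+1).val:ℤ)) = n * t := by exact_mod_cast ht
  exact ⟨-t, by rw [mul_neg, ← h2]; ring⟩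

lemma fin_val_dvd_sub (n : ℕ) [NeZero n] (i : Fin n) :
    (n:ℤ) ∣ (((i-1).val : ℤ) - ((i.val:ℤ) - 1)) := by
  have h := fin_val_dvd_add n (i - 1)
  rw [sub_add_cancel] at h
  obtain ⟨t, ht⟩ := h
  exact ⟨-t, by rw [mul_neg, ← ht]; ring⟩

lemma Efn_theta (n : ℕ) (t : ℤ) :
    Efn n t = Complex.exp (((2 * Real.pi * t / n : ℝ) : ℂ) * Complex.I) := by
  rw [Efn]; congr 1; push_cast; ring

lemma Efn_diff_normSq (n : ℕ) (k : ℕ) :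
    Complex.normSq (Efn n (-(k:ℤ)) - Efn n (k:ℤ)) = 4 * Real.sin (2 * Real.pi * k / n) ^ 2 := by
  have key : Efn n (-(k:ℤ)) - Efn n (k:ℤ)
      = ((-2 * Real.sin (2 * Real.pi * k / n) : ℝ) : ℂ) * Complex.I := by
    rw [Efn_theta, Efn_theta, Complex.exp_mul_I, Complex.exp_mul_I,
      ← Complex.ofReal_sin, ← Complex.ofReal_sin, ← Complex.ofReal_cos, ← Complex.ofReal_cos]
    have harg : (2 * Real.pi * ((-(k:ℤ) : ℤ) : ℝ) / n : ℝ) = -(2 * Real.pi * ((k:ℤ) : ℝ) / n) := by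
      push_cast; ring
    rw [harg, Real.sin_neg, Real.cos_neg]
    push_cast
    ring
  rw [key]
  rw [Complex.normSq_mul, Complex.normSq_I, Complex.normSq_ofReal]
  ring

lemma shift_plus (n : ℕ) [NeZero n] (v : Fin n → ℝ) (k : Fin n) :
    ∑ j : Fin n, (v (j+1) : ℂ) * Efn n (j.val * k.val)
      = Efn n (-(k.val:ℤ)) * ∑ j : Fin n, (v j : ℂ) * Efn n (j.val * k.val) := by
  have := Fintype.sum_equiv (Equiv.addRight (1 : Fin n))
    (fun j : Fin n => (v (j+1) : ℂ) * Efn n (j.val * k.val))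
    (fun i : Fin n => (v i : ℂ) * Efn n ((i-1).val * k.val))
    (by
      intro j
      simp only [Equiv.coe_addRight]
      rw [add_sub_cancel_right])
  rw [this, Finset.mul_sum]
  refine Finset.sum_congr rfl fun i _ => ?_
  have hc : Efn n (((i-1).val:ℤ) * k.val) = Efn n (-(k.val:ℤ) + (i.val:ℤ) * k.val) := by
    apply Efn_congr
    have h := fin_val_dvd_sub n i
    have : (((i-1).val:ℤ) * k.val) - (-(k.val:ℤ) + (i.val:ℤ) * k.val)
        = (((i-1).val : ℤ) - ((i.val:ℤ) - 1)) * k.val := by ring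
    rw [this]
    exact Dvd.dvd.mul_right h _
  rw [hc, Efn_add]
  ring

lemma shift_minus (n : ℕ) [NeZero n] (v : Fin n → ℝ) (k : Fin n) :
    ∑ j : Fin n, (v (j-1) : ℂ) * Efn n (j.val * k.val)
      = Efn n ((k.val:ℤ)) * ∑ j : Fin n, (v j : ℂ) * Efn n (j.val * k.val) := by
  have := Fintype.sum_equiv (Equiv.subRight (1 : Fin n))
    (fun j : Fin n => (v (j-1) : ℂ) * Efn n (j.val * k.val))
    (fun i : Fin n => (v i : ℂ) * Efn n ((i+1).val * k.val))
    (by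
      intro j
      simp only [Equiv.subRight_apply]
      rw [sub_add_cancel])
  rw [this, Finset.mul_sum]
  refine Finset.sum_congr rfl fun i _ => ?_
  have hc : Efn n (((i+1).val:ℤ) * k.val) = Efn n ((k.val:ℤ) + (i.val:ℤ) * k.val) := by
    apply Efn_congr
    have h := fin_val_dvd_add n i
    have : (((i+1).val:ℤ) * k.val) - ((k.val:ℤ) + (i.val:ℤ) * k.val)
        = (((i+1).val : ℤ) - ((i.val:ℤ) + 1)) * k.val := by ring
    rw [this]
    exact Dvd.dvd.mul_right h _
  rw [hc, Efn_add]
  ring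

/-- Sharp spectral bound for the periodic central difference. -/
lemma key_ineq (n : ℕ) [NeZero n] (M : ℝ)
    (hM : ∀ k : Fin n, Real.sin (2 * Real.pi * k.val / n) ^ 2 ≤ M)
    (v : Fin n → ℝ) :
    ∑ j : Fin n, (v (j+1) - v (j-1))^2 ≤ 4 * M * ∑ j : Fin n, (v j)^2 := by
  set d : Fin n → ℝ := fun j => v (j+1) - v (j-1) with hd
  have hD : ∀ k : Fin n, (∑ j : Fin n, (d j : ℂ) * Efn n (j.val * k.val))
      = (Efn n (-(k.val:ℤ)) - Efn n ((k.val:ℤ))) *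
        (∑ j : Fin n, (v j : ℂ) * Efn n (j.val * k.val)) := by
    intro k
    have : ∀ j : Fin n, (d j : ℂ) * Efn n (j.val * k.val)
        = (v (j+1) : ℂ) * Efn n (j.val * k.val) - (v (j-1) : ℂ) * Efn n (j.val * k.val) := by
      intro j; rw [hd]; push_cast; ring
    rw [Finset.sum_congr rfl fun j _ => this j, Finset.sum_sub_distrib,
      shift_plus, shift_minus]
    ring
  have hP1 := parseval_fin n v
  have hP2 := parseval_fin n d
  have hbound : ∀ k : Fin n,
      Complex.normSq (∑ j : Fin n, (d j : ℂ) * Efn n (j.val * k.val))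
        ≤ 4 * M * Complex.normSq (∑ j : Fin n, (v j : ℂ) * Efn n (j.val * k.val)) := by
    intro k
    rw [hD k, Complex.normSq_mul, Efn_diff_normSq]
    have h1 : Real.sin (2 * Real.pi * k.val / n) ^ 2 ≤ M := hM k
    have h2 : (0:ℝ) ≤ Complex.normSq (∑ j : Fin n, (v j : ℂ) * Efn n (j.val * k.val)) :=
      Complex.normSq_nonneg _
    nlinarith
  have hsum : (n:ℝ) * ∑ j : Fin n, (d j)^2 ≤ 4 * M * ((n:ℝ) * ∑ j : Fin n, (v j)^2) := by
    rw [← hP1, ← hP2, Finset.mul_sum]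
    exact Finset.sum_le_sum fun k _ => hbound k
  have hn : (0:ℝ) < n := by
    have := NeZero.pos n; exact_mod_cast this
  calc ∑ j : Fin n, (v (j+1) - v (j-1))^2 = ∑ j : Fin n, (d j)^2 := rfl
    _ ≤ 4 * M * ∑ j : Fin n, (v j)^2 := by
        have h := hsum
        rw [show 4 * M * ((n:ℝ) * ∑ j : Fin n, (v j)^2)
            = (n:ℝ) * (4 * M * ∑ j : Fin n, (v j)^2) by ring] at h
        exact le_of_mul_le_mul_left h hn

lemma mulVec_sq_le {m : ℕ} (A : Matrix (Fin m) (Fin m) ℝ) (x : Fin m → ℝ) :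
    ∑ j, (A.mulVec x j)^2 ≤ specNorm A ^ 2 * ∑ j, (x j)^2 := by
  have h := (Matrix.toEuclideanCLM (𝕜 := ℝ) A).le_opNorm ((WithLp.equiv 2 (Fin m → ℝ)).symm x)
  change ‖(WithLp.equiv 2 (Fin m → ℝ)).symm (Matrix.toLin' A x)‖ ≤ _ at h
  have hnorm : ∀ y : Fin m → ℝ,
      ‖((WithLp.equiv 2 (Fin m → ℝ)).symm y : EuclideanSpace ℝ (Fin m))‖
        = Real.sqrt (∑ j, (y j)^2) := by
    intro y
    rw [EuclideanSpace.norm_eq]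
    congr 1
    refine Finset.sum_congr rfl fun j _ => ?_
    rw [WithLp.equiv_symm_apply, PiLp.toLp_apply, Real.norm_eq_abs, sq_abs]
  rw [hnorm, hnorm, Matrix.toLin'_apply] at h
  have hnn : (0:ℝ) ≤ Real.sqrt (∑ j, (A.mulVec x j)^2) := Real.sqrt_nonneg _
  have h1 : Real.sqrt (∑ j, (A.mulVec x j)^2) ^ 2
      ≤ (specNorm A * Real.sqrt (∑ j, (x j)^2)) ^ 2 := by
    rw [specNorm]
    exact pow_le_pow_left₀ hnn h 2
  rw [Real.sq_sqrt (Finset.sum_nonneg fun j _ => sq_nonneg _)] at h1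
  rw [mul_pow, Real.sq_sqrt (Finset.sum_nonneg fun j _ => sq_nonneg _)] at h1
  exact h1

lemma L2_transpose (n : ℕ) [NeZero n] (Δt Δx : ℝ) :
    (L2 n Δt Δx)ᵀ = -(L2 n Δt Δx) := by
  have e1 : ∀ (j k : Fin n), (j = k + 1) ↔ (k = j - 1) := by
    intro j k
    constructor
    · rintro rfl; rw [add_sub_cancel_right]
    · rintro rfl; rw [sub_add_cancel]
  have e2 : ∀ (j k : Fin n), (j = k - 1) ↔ (k = j + 1) := by
    intro j k
    constructor
    · rintro rfl; rw [sub_add_cancel]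
    · rintro rfl; rw [add_sub_cancel_right]
  ext j k
  simp only [Matrix.transpose_apply, Matrix.neg_apply, L2, Matrix.of_apply]
  rw [if_congr (e1 j k) rfl rfl, if_congr (e2 j k) rfl rfl]
  split_ifs <;> ring

lemma L2_mul_apply (n m : ℕ) [NeZero n] (Δt Δx : ℝ) (w : Matrix (Fin n) (Fin m) ℝ)
    (j : Fin n) (β : Fin m) :
    (L2 n Δt Δx * w) j β = Δt / (2 * Δx) * (w (j+1) β - w (j-1) β) := by
  rw [Matrix.mul_apply]
  simp only [L2, Matrix.of_apply, add_mul, ite_mul, zero_mul, neg_mul]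
  rw [Finset.sum_add_distrib, Finset.sum_ite_eq' Finset.univ (j+1) (fun p => Δt/(2*Δx) * w p β),
    Finset.sum_ite_eq' Finset.univ (j-1) (fun p => -(Δt/(2*Δx) * w p β))]
  simp only [Finset.mem_univ, if_true]
  ring

lemma frob_sq {n m : ℕ} (X : Matrix (Fin n) (Fin m) ℝ) :
    frob X ^ 2 = ∑ i, ∑ j, (X i j) ^ 2 :=
  Real.sq_sqrt (Finset.sum_nonneg fun i _ => Finset.sum_nonneg fun j _ => sq_nonneg _)

lemma cross_zero (n m : ℕ) [NeZero n] (Δt Δx : ℝ)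
    (A : Matrix (Fin m) (Fin m) ℝ) (hA : A.IsSymm) (u : Matrix (Fin n) (Fin m) ℝ) :
    ∑ i, ∑ j, u i j * (L2 n Δt Δx * u * Aᵀ) i j = 0 := by
  set L := L2 n Δt Δx with hL
  set W := L * u * Aᵀ with hW
  have hT : ∑ i, ∑ j, u i j * W i j = Matrix.trace (uᵀ * W) := by
    rw [Matrix.trace]
    rw [Finset.sum_comm]
    refine Finset.sum_congr rfl fun j _ => ?_
    rw [Matrix.diag_apply, Matrix.mul_apply]
    exact Finset.sum_congr rfl fun i _ => by rw [Matrix.transpose_apply]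
  have hneg : Matrix.trace (uᵀ * W) = - Matrix.trace (uᵀ * W) := by
    conv_lhs => rw [← Matrix.trace_transpose]
    have e : (uᵀ * W)ᵀ = -(A * (uᵀ * L * u)) := by
      rw [hW, Matrix.transpose_mul, Matrix.transpose_mul, Matrix.transpose_mul,
        Matrix.transpose_transpose, Matrix.transpose_transpose, L2_transpose, ← hL]
      simp only [Matrix.mul_neg, Matrix.neg_mul, Matrix.mul_assoc]
    rw [e, Matrix.trace_neg]
    congr 1
    rw [Matrix.trace_mul_comm, hW, hA.eq]
    simp only [Matrix.mul_assoc]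
  have : Matrix.trace (uᵀ * W) = 0 := by linarith
  rw [hT, this]

/- Amplification bound for the stabilization-free (backward-in-time) S-step:
‖u + L² u Aᵀ‖_F² = ‖u‖_F² + ‖L² u Aᵀ‖_F² ≤ (1 + c² max_α sin²(2πα/n)) ‖u‖_F². -/
theorem stmt9 (n m : ℕ) [NeZero n] (Δt Δx : ℝ) (hΔt : 0 < Δt) (hΔx : 0 < Δx)
    (A : Matrix (Fin m) (Fin m) ℝ) (hA : A.IsSymm)
    (c : ℝ) (hc : c = specNorm A * Δt / Δx)
    (u : Matrix (Fin n) (Fin m) ℝ) :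
    frob (u + L2 n Δt Δx * u * Aᵀ) ^ 2
        = frob u ^ 2 + frob (L2 n Δt Δx * u * Aᵀ) ^ 2 ∧
    frob (u + L2 n Δt Δx * u * Aᵀ) ^ 2
      ≤ (1 + c ^ 2 * (Finset.Icc 1 n).sup'
            (Finset.nonempty_Icc.mpr (Nat.one_le_iff_ne_zero.mpr (NeZero.ne n)))
            (fun α : ℕ => Real.sin (2 * π * α / n) ^ 2))
        * frob u ^ 2 := by
  have hne : (Finset.Icc 1 n).Nonempty :=
    Finset.nonempty_Icc.mpr (Nat.one_le_iff_ne_zero.mpr (NeZero.ne n))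
  set M : ℝ := (Finset.Icc 1 n).sup' hne (fun α : ℕ => Real.sin (2 * π * α / n) ^ 2) with hMdef
  set W : Matrix (Fin n) (Fin m) ℝ := L2 n Δt Δx * u * Aᵀ with hWdef
  -- the equality
  have heq : frob (u + W) ^ 2 = frob u ^ 2 + frob W ^ 2 := by
    rw [frob_sq, frob_sq, frob_sq]
    have expand : ∑ i, ∑ j, ((u + W) i j)^2
        = (∑ i, ∑ j, (u i j)^2) + ((∑ i, ∑ j, 2 * (u i j * W i j)) + ∑ i, ∑ j, (W i j)^2) := by
      calc ∑ i, ∑ j, ((u + W) i j)^2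
          = ∑ i, ∑ j, ((u i j)^2 + (2 * (u i j * W i j) + (W i j)^2)) := by
            refine Finset.sum_congr rfl fun i _ => Finset.sum_congr rfl fun j _ => ?_
            rw [Matrix.add_apply]
            ring
        _ = _ := by simp only [Finset.sum_add_distrib]
    rw [expand]
    have hcr : ∑ i, ∑ j, 2 * (u i j * W i j) = 0 := by
      have h0 := cross_zero n m Δt Δx A hA u
      calc ∑ i, ∑ j, 2 * (u i j * W i j)
          = 2 * ∑ i, ∑ j, u i j * W i j := by
            simp only [← Finset.mul_sum]
        _ = 0 := by rw [hWdef, h0, mul_zero]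
    rw [hcr, zero_add]
  refine ⟨heq, ?_⟩
  -- spectral bound ingredients
  have hM0 : 0 ≤ M := by
    have hmem : n ∈ Finset.Icc 1 n :=
      Finset.mem_Icc.mpr ⟨Nat.one_le_iff_ne_zero.mpr (NeZero.ne n), le_refl n⟩
    exact le_trans (sq_nonneg (Real.sin (2 * π * n / n)))
      (Finset.le_sup' (fun α : ℕ => Real.sin (2 * π * α / n) ^ 2) hmem)
  have hMk : ∀ k : Fin n, Real.sin (2 * Real.pi * k.val / n) ^ 2 ≤ M := by
    intro k
    rcases Nat.eq_zero_or_pos k.val with h0 | h1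
    · rw [h0]
      simpa using hM0
    · exact Finset.le_sup' (fun α : ℕ => Real.sin (2 * π * α / n) ^ 2)
        (Finset.mem_Icc.mpr ⟨h1, le_of_lt k.isLt⟩)
  -- bound on frob W ^ 2
  set B : Matrix (Fin n) (Fin m) ℝ := u * Aᵀ with hBdef
  have hWB : W = L2 n Δt Δx * B := by rw [hWdef, hBdef, Matrix.mul_assoc]
  have hstep1 : frob W ^ 2 ≤ (Δt / Δx)^2 * M * frob B ^ 2 := by
    rw [frob_sq, frob_sq, hWB]
    rw [Finset.sum_comm]
    have hcol : ∀ β : Fin m, ∑ j : Fin n, ((L2 n Δt Δx * B) j β)^2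
        ≤ (Δt / Δx)^2 * M * ∑ j : Fin n, (B j β)^2 := by
      intro β
      have h1 : ∀ j : Fin n, ((L2 n Δt Δx * B) j β)^2
          = (Δt / (2 * Δx))^2 * ((fun j => B j β) (j+1) - (fun j => B j β) (j-1))^2 := by
        intro j
        rw [L2_mul_apply]
        ring
      rw [Finset.sum_congr rfl fun j _ => h1 j, ← Finset.mul_sum]
      have h2 := key_ineq n M hMk (fun j => B j β)
      have h3 : (0:ℝ) ≤ (Δt / (2 * Δx))^2 := sq_nonneg _
      calc (Δt / (2 * Δx))^2 * ∑ j : Fin n, ((fun j => B j β) (j+1) - (fun j => B j β) (j-1))^2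
          ≤ (Δt / (2 * Δx))^2 * (4 * M * ∑ j : Fin n, (B j β)^2) := by
            exact mul_le_mul_of_nonneg_left h2 h3
        _ = (Δt / Δx)^2 * M * ∑ j : Fin n, (B j β)^2 := by
            field_simp
            ring
    calc ∑ β : Fin m, ∑ j : Fin n, ((L2 n Δt Δx * B) j β)^2
        ≤ ∑ β : Fin m, (Δt / Δx)^2 * M * ∑ j : Fin n, (B j β)^2 :=
          Finset.sum_le_sum fun β _ => hcol β
      _ = (Δt / Δx)^2 * M * ∑ β : Fin m, ∑ j : Fin n, (B j β)^2 := by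
          rw [Finset.mul_sum]
      _ = (Δt / Δx)^2 * M * ∑ j : Fin n, ∑ β : Fin m, (B j β)^2 := by
          rw [Finset.sum_comm]
  have hstep2 : frob B ^ 2 ≤ specNorm A ^ 2 * frob u ^ 2 := by
    rw [frob_sq, frob_sq]
    have hrow : ∀ i : Fin n, ∑ j : Fin m, (B i j)^2
        ≤ specNorm A ^ 2 * ∑ k : Fin m, (u i k)^2 := by
      intro i
      have hBij : ∀ j : Fin m, B i j = A.mulVec (fun k => u i k) j := by
        intro j
        rw [hBdef, Matrix.mul_apply, Matrix.mulVec, dotProduct]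
        refine Finset.sum_congr rfl fun k _ => ?_
        rw [Matrix.transpose_apply]
        ring
      rw [Finset.sum_congr rfl fun j _ => by rw [hBij j]]
      exact mulVec_sq_le A (fun k => u i k)
    calc ∑ i, ∑ j, (B i j)^2 ≤ ∑ i, specNorm A ^ 2 * ∑ k, (u i k)^2 :=
          Finset.sum_le_sum fun i _ => hrow i
      _ = specNorm A ^ 2 * ∑ i, ∑ k, (u i k)^2 := by rw [Finset.mul_sum]
  have hWfinal : frob W ^ 2 ≤ c^2 * M * frob u ^ 2 := by
    have hs : (0:ℝ) ≤ (Δt / Δx)^2 * M := mul_nonneg (sq_nonneg _) hM0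
    calc frob W ^ 2 ≤ (Δt / Δx)^2 * M * frob B ^ 2 := hstep1
      _ ≤ (Δt / Δx)^2 * M * (specNorm A ^ 2 * frob u ^ 2) :=
          mul_le_mul_of_nonneg_left hstep2 hs
      _ = c^2 * M * frob u ^ 2 := by
          rw [hc]
          field_simp
  rw [heq]
  nlinarith [sq_nonneg (frob u), sq_nonneg (frob W)]
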